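/- Let β be a Pisot number and T the β-transformation. If x ∈ ℤ[β,β⁻¹] ∩ [0,1) satisfies T^n(x) = x for some n ≥ 1, then x ∈ ℤ[β]. -/

import Mathlib

noncomputable section

open IntermediateField

/-- A Pisot number: a real algebraic integer `β > 1` such that every ring embedding
`σ : ℚ(β) → ℂ` with `σ(β) ≠ β` satisfies `|σ(β)| < 1`. -/
def IsPisot (β : ℝ) : Prop :=
  1 < β ∧ IsIntegral ℤ β ∧
    ∀ σ : ℚ⟮β⟯ →+* ℂ, σ (AdjoinSimple.gen ℚ β) ≠ (β : ℂ) →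
      ‖σ (AdjoinSimple.gen ℚ β)‖ < 1

/-- The β-transformation `T(x) = βx − ⌊βx⌋`. -/
def betaT (β : ℝ) (x : ℝ) : ℝ := Int.fract (β * x)

/-- For a Pisot number `β`, a purely periodic point of the β-transformation lying in
`ℤ[β,β⁻¹] ∩ [0,1)` actually lies in `ℤ[β]`. -/
theorem purely_periodic_mem_zbeta (β : ℝ) (hβ : IsPisot β)
    (x : ℝ) (hx : x ∈ Algebra.adjoin ℤ ({β, β⁻¹} : Set ℝ)) (hx01 : x ∈ Set.Ico (0 : ℝ) 1)
    (n : ℕ) (hn : 1 ≤ n) (hper : (betaT β)^[n] x = x) :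
    x ∈ Algebra.adjoin ℤ ({β} : Set ℝ) := by
  obtain ⟨hβ1, -, -⟩ := hβ
  have hβ0 : β ≠ 0 := by linarith
  set A := Algebra.adjoin ℤ ({β} : Set ℝ) with hA
  have hβA : β ∈ A := Algebra.subset_adjoin rfl
  -- Step 1: β^k * x - T^[k] x ∈ A for all k
  have step1 : ∀ k : ℕ, β ^ k * x - (betaT β)^[k] x ∈ A := by
    intro k
    induction k with
    | zero => simpa using zero_mem A
    | succ k ih =>
      rw [Function.iterate_succ_apply']
      have hT : betaT β ((betaT β)^[k] x)
          = β * (betaT β)^[k] x - (⌊β * (betaT β)^[k] x⌋ : ℝ) := rfl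
      rw [hT]
      have h2 : β ^ (k + 1) * x - (β * (betaT β)^[k] x - (⌊β * (betaT β)^[k] x⌋ : ℝ))
          = β * (β ^ k * x - (betaT β)^[k] x) + (⌊β * (betaT β)^[k] x⌋ : ℝ) := by ring
      rw [h2]
      exact add_mem (mul_mem hβA ih) (A.intCast_mem _)
  have h1 : β ^ n * x - x ∈ A := by
    have := step1 n; rwa [hper] at this
  -- Step 2: β^(n*k) * x - x ∈ A for all k
  have step2 : ∀ k : ℕ, β ^ (n * k) * x - x ∈ A := by
    intro k
    induction k with
    | zero => simpa using zero_mem A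
    | succ k ih =>
      have e : β ^ (n * (k + 1)) * x - x
          = β ^ n * (β ^ (n * k) * x - x) + (β ^ n * x - x) := by
        rw [Nat.mul_succ, pow_add]; ring
      rw [e]
      exact add_mem (mul_mem (pow_mem hβA n) ih) h1
  -- Step 3: some power of β times x lies in A
  have step3 : ∀ y ∈ Algebra.adjoin ℤ ({β, β⁻¹} : Set ℝ), ∃ m : ℕ, β ^ m * y ∈ A := by
    intro y hy0
    induction hy0 using Algebra.adjoin_induction with
    | mem y hy =>
      rw [Set.mem_insert_iff, Set.mem_singleton_iff] at hy
      rcases hy with rfl | rfl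
      · exact ⟨0, by simpa using hβA⟩
      · refine ⟨1, ?_⟩
        rw [pow_one, mul_inv_cancel₀ hβ0]
        exact one_mem A
    | algebraMap r => exact ⟨0, by simpa using A.algebraMap_mem r⟩
    | add y z hy hz ihy ihz =>
      obtain ⟨m1, h1'⟩ := ihy
      obtain ⟨m2, h2'⟩ := ihz
      refine ⟨m1 + m2, ?_⟩
      have e : β ^ (m1 + m2) * (y + z)
          = β ^ m2 * (β ^ m1 * y) + β ^ m1 * (β ^ m2 * z) := by
        rw [pow_add]; ring
      rw [e]
      exact add_mem (mul_mem (pow_mem hβA m2) h1') (mul_mem (pow_mem hβA m1) h2')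
    | mul y z hy hz ihy ihz =>
      obtain ⟨m1, h1'⟩ := ihy
      obtain ⟨m2, h2'⟩ := ihz
      refine ⟨m1 + m2, ?_⟩
      have e : β ^ (m1 + m2) * (y * z) = (β ^ m1 * y) * (β ^ m2 * z) := by
        rw [pow_add]; ring
      rw [e]
      exact mul_mem h1' h2'
  obtain ⟨m, hm⟩ := step3 x hx
  have hmle : m ≤ n * m := Nat.le_mul_of_pos_left m (by omega)
  have h4 : β ^ (n * m) * x ∈ A := by
    have e : β ^ (n * m) * x = β ^ (n * m - m) * (β ^ m * x) := by
      rw [← mul_assoc, ← pow_add]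
      congr 2
      omega
    rw [e]
    exact mul_mem (pow_mem hβA _) hm
  have e : x = β ^ (n * m) * x - (β ^ (n * m) * x - x) := by ring
  rw [e]
  exact sub_mem h4 (step2 m)
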